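/- Let N ≥ 2 and k ∈ ℕ. For every K > 0 there exists M' = M'(k,K,N) > 0 such that, for every open set Ω ⊆ ℝ^N, if λ₁(Ω) ≤ K then λ_k(Ω) ≤ M'. -/

import Mathlib

open MeasureTheory Set
open scoped ENNReal

noncomputable section

namespace SpectralMin

/-- Points of `ℝ^N`. -/
abbrev EucN (N : ℕ) := EuclideanSpace ℝ (Fin N)

variable {N : ℕ}

/-- The squared Euclidean norm `|Du(z)|²` of the gradient of `u` at `z`. -/
def gradSqE (u : EucN N → ℝ) (z : EucN N) : ℝ :=
  ∑ p : Fin N, (fderiv ℝ u z (EuclideanSpace.single p 1)) ^ 2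

/-- The Rayleigh quotient `R(u, D) = (∫_D |Du|²) / (∫_D u²)`. -/
def rayleighE (D : Set (EucN N)) (u : EucN N → ℝ) : ℝ :=
  (∫ z in D, gradSqE u z) / (∫ z in D, (u z) ^ 2)

/-- Test functions for `Ω`: smooth functions compactly supported inside `Ω`. -/
def IsTestE (Ω : Set (EucN N)) (φ : EucN N → ℝ) : Prop :=
  ContDiff ℝ (⊤ : ℕ∞) φ ∧ HasCompactSupport φ ∧ tsupport φ ⊆ Ω

/-- The `k`-th Dirichlet eigenvalue `λ_k(Ω)` of an open set `Ω ⊆ ℝ^N`, via the min-max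
(Courant–Fischer) principle over `k`-dimensional subspaces of `C_c^∞(Ω) ⊆ W^{1,2}_0(Ω)`. -/
def eigenvalE (Ω : Set (EucN N)) (k : ℕ) : ℝ :=
  sInf { c : ℝ | ∃ u : Fin k → EucN N → ℝ, (∀ i, IsTestE Ω (u i)) ∧ LinearIndependent ℝ u ∧
    ∀ β : Fin k → ℝ, β ≠ 0 → rayleighE univ (fun z => ∑ i, β i * u i z) ≤ c }

lemma gradSqE_nonneg (u : EucN N → ℝ) (z : EucN N) : 0 ≤ gradSqE u z :=
  Finset.sum_nonneg fun _ _ => sq_nonneg _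

lemma continuous_gradSqE {u : EucN N → ℝ} (hu : ContDiff ℝ (⊤ : ℕ∞) u) :
    Continuous (gradSqE u) := by
  have h := hu.continuous_fderiv (by simp)
  exact continuous_finset_sum _ fun p _ =>
    ((ContinuousLinearMap.apply ℝ ℝ (EuclideanSpace.single p 1)).continuous.comp h).pow 2

lemma hasCompactSupport_gradSqE {u : EucN N → ℝ} (hc : HasCompactSupport u) :
    HasCompactSupport (gradSqE u) := by
  have h1 : HasCompactSupport (fderiv ℝ u) := hc.fderiv ℝ
  have : gradSqE u = (fun L : EucN N →L[ℝ] ℝ => ∑ p : Fin N, (L (EuclideanSpace.single p 1)) ^ 2)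
      ∘ (fderiv ℝ u) := rfl
  rw [this]
  exact h1.comp_left (by simp)

lemma rayleighE_nonneg (u : EucN N → ℝ) : 0 ≤ rayleighE univ u := by
  apply div_nonneg
  · exact integral_nonneg fun z => gradSqE_nonneg u z
  · exact integral_nonneg fun z => sq_nonneg _

lemma rayleighE_smul (u : EucN N → ℝ) {b : ℝ} (hb : b ≠ 0) (hu : ContDiff ℝ (⊤ : ℕ∞) u) :
    rayleighE univ (fun z => b * u z) = rayleighE univ u := by
  have hg : ∀ z, gradSqE (fun z => b * u z) z = b ^ 2 * gradSqE u z := by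
    intro z
    have hd : fderiv ℝ (fun z => b * u z) z = b • fderiv ℝ u z := by
      rw [fderiv_const_mul (hu.differentiable (by simp) z)]
    simp only [gradSqE, hd, ContinuousLinearMap.smul_apply, smul_eq_mul, mul_pow,
      Finset.mul_sum]
  have hs : ∀ z, (b * u z) ^ 2 = b ^ 2 * (u z) ^ 2 := fun z => by ring
  simp only [rayleighE, hg, hs, integral_const_mul]
  rw [mul_div_mul_left _ _ (pow_ne_zero 2 hb)]

section Trapezoid

lemma st_deriv_zero {t : ℝ} (ht : t ∉ Icc (0:ℝ) 1) : deriv Real.smoothTransition t = 0 := by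
  simp only [mem_Icc, not_and_or, not_le] at ht
  rcases ht with h | h
  · have : Real.smoothTransition =ᶠ[nhds t] (fun _ => 0) := by
      filter_upwards [Iio_mem_nhds h] with s hs
      exact Real.smoothTransition.zero_of_nonpos (le_of_lt hs)
    rw [this.deriv_eq]; simp
  · have : Real.smoothTransition =ᶠ[nhds t] (fun _ => 1) := by
      filter_upwards [Ioi_mem_nhds h] with s hs
      exact Real.smoothTransition.one_of_one_le (le_of_lt hs)
    rw [this.deriv_eq]; simp

lemma st_deriv_bound : ∃ B : ℝ, 1 ≤ B ∧ ∀ t, |deriv Real.smoothTransition t| ≤ B := by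
  have hcont : Continuous (deriv Real.smoothTransition) :=
    (Real.smoothTransition.contDiff (n := ⊤)).continuous_deriv (by simp)
  obtain ⟨B0, hB0⟩ := (isCompact_Icc (a := (0:ℝ)) (b := 1)).exists_bound_of_continuousOn
    hcont.continuousOn
  refine ⟨max B0 1, le_max_right _ _, fun t => ?_⟩
  by_cases ht : t ∈ Icc (0:ℝ) 1
  · exact le_trans (hB0 t ht) (le_max_left _ _)
  · rw [st_deriv_zero ht]; simp

/-- Smooth trapezoid cutoffs on ℝ. -/
lemma exists_trapezoid : ∃ B : ℝ, 1 ≤ B ∧ ∀ (a b δ : ℝ), 0 < δ → a ≤ b →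
    ∃ τ : ℝ → ℝ, ContDiff ℝ (⊤ : ℕ∞) τ ∧ (∀ t, 0 ≤ τ t) ∧ (∀ t, τ t ≤ 1) ∧
      (∀ t ∈ Icc a b, τ t = 1) ∧ (∀ t, t ∉ Ioo (a - δ) (b + δ) → τ t = 0) ∧
      (∀ t, |deriv τ t| ≤ 2 * B / δ) := by
  obtain ⟨B, hB1, hB⟩ := st_deriv_bound
  refine ⟨B, hB1, fun a b δ hδ hab => ?_⟩
  set ST := Real.smoothTransition with hST
  have hst : ContDiff ℝ (⊤ : ℕ∞) ST := Real.smoothTransition.contDiff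
  set τ : ℝ → ℝ := fun t => ST ((t - (a - δ)) / δ) * ST (((b + δ) - t) / δ) with hτ
  have hc1 : ContDiff ℝ (⊤ : ℕ∞) (fun t : ℝ => ST ((t - (a - δ)) / δ)) :=
    hst.comp (ContDiff.div_const (by fun_prop) δ)
  have hc2 : ContDiff ℝ (⊤ : ℕ∞) (fun t : ℝ => ST (((b + δ) - t) / δ)) :=
    hst.comp (ContDiff.div_const (by fun_prop) δ)
  have hτc : ContDiff ℝ (⊤ : ℕ∞) τ := hc1.mul hc2
  have hderiv : ∀ t, HasDerivAt τ
      ((deriv ST ((t - (a - δ)) / δ) * (1/δ)) * ST (((b + δ) - t) / δ)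
        + ST ((t - (a - δ)) / δ) * (deriv ST (((b + δ) - t) / δ) * (-1/δ))) t := by
    intro t
    have h1 : HasDerivAt (fun t : ℝ => ST ((t - (a - δ)) / δ))
        (deriv ST ((t - (a - δ)) / δ) * (1/δ)) t := by
      have hin : HasDerivAt (fun t : ℝ => (t - (a - δ)) / δ) (1/δ) t := by
        simpa using ((hasDerivAt_id t).sub_const (a - δ)).div_const δ
      exact (((hst.differentiable (by simp)) _).hasDerivAt).comp t hin
    have h2 : HasDerivAt (fun t : ℝ => ST (((b + δ) - t) / δ))
        (deriv ST (((b + δ) - t) / δ) * (-1/δ)) t := by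
      have hin : HasDerivAt (fun t : ℝ => ((b + δ) - t) / δ) (-1/δ) t := by
        simpa using ((hasDerivAt_const t (b+δ)).sub (hasDerivAt_id t)).div_const δ
      exact (((hst.differentiable (by simp)) _).hasDerivAt).comp t hin
    exact h1.mul h2
  refine ⟨τ, hτc, ?_, ?_, ?_, ?_, ?_⟩
  · intro t; exact mul_nonneg (Real.smoothTransition.nonneg _) (Real.smoothTransition.nonneg _)
  · intro t
    exact mul_le_one₀ (Real.smoothTransition.le_one _) (Real.smoothTransition.nonneg _)
      (Real.smoothTransition.le_one _)
  · intro t ht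
    have e1 : ST ((t - (a - δ)) / δ) = 1 := by
      apply Real.smoothTransition.one_of_one_le
      rw [le_div_iff₀ hδ]; linarith [ht.1]
    have e2 : ST (((b + δ) - t) / δ) = 1 := by
      apply Real.smoothTransition.one_of_one_le
      rw [le_div_iff₀ hδ]; linarith [ht.2]
    simp [hτ, e1, e2]
  · intro t ht
    simp only [mem_Ioo, not_and_or, not_lt] at ht
    rcases ht with h | h
    · have : ST ((t - (a - δ)) / δ) = 0 := by
        apply Real.smoothTransition.zero_of_nonpos
        apply div_nonpos_of_nonpos_of_nonneg (by linarith) hδ.le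
      simp [hτ, this]
    · have : ST (((b + δ) - t) / δ) = 0 := by
        apply Real.smoothTransition.zero_of_nonpos
        apply div_nonpos_of_nonpos_of_nonneg (by linarith) hδ.le
      simp [hτ, this]
  · intro t
    rw [(hderiv t).deriv]
    have hs1 : |ST ((t - (a - δ)) / δ)| ≤ 1 := by
      rw [abs_of_nonneg (Real.smoothTransition.nonneg _)]
      exact Real.smoothTransition.le_one _
    have hs2 : |ST (((b + δ) - t) / δ)| ≤ 1 := by
      rw [abs_of_nonneg (Real.smoothTransition.nonneg _)]
      exact Real.smoothTransition.le_one _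
    have h1 := hB ((t - (a - δ)) / δ)
    have h2 := hB (((b + δ) - t) / δ)
    calc |deriv ST ((t - (a - δ)) / δ) * (1/δ) * ST (((b + δ) - t) / δ)
        + ST ((t - (a - δ)) / δ) * (deriv ST (((b + δ) - t) / δ) * (-1/δ))|
        ≤ |deriv ST ((t - (a - δ)) / δ) * (1/δ) * ST (((b + δ) - t) / δ)|
          + |ST ((t - (a - δ)) / δ) * (deriv ST (((b + δ) - t) / δ) * (-1/δ))| := abs_add_le _ _
      _ ≤ (B * |1/δ|) * 1 + 1 * (B * |(-1)/δ|) := by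
          rw [abs_mul, abs_mul, abs_mul, abs_mul]
          gcongr
      _ = 2 * B / δ := by
          rw [abs_div, abs_div, abs_of_pos hδ]
          simp only [abs_one, abs_neg]
          field_simp
          ring

end Trapezoid
lemma abs_coord_le_norm {N : ℕ} (x : EucN N) (i : Fin N) : |x i| ≤ ‖x‖ := by
  rw [EuclideanSpace.norm_eq]
  have h1 : |x i| = Real.sqrt (‖x i‖ ^ 2) := by
    rw [Real.sqrt_sq_eq_abs]; simp
  rw [h1]
  apply Real.sqrt_le_sqrt
  exact Finset.single_le_sum (f := fun j => ‖x j‖^2) (fun j _ => by positivity) (Finset.mem_univ i)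

/-- The measurable equivalence `ℝ × ℝ^n ≃ ℝ^{n+1}` splitting off the first coordinate. -/
def PsiE (n : ℕ) : (ℝ × (Fin n → ℝ)) ≃ᵐ EucN (n+1) :=
  ((MeasurableEquiv.piFinSuccAbove (fun _ : Fin (n+1) => ℝ) 0).symm).trans
    (MeasurableEquiv.toLp 2 (Fin (n+1) → ℝ))

lemma PsiE_measurePreserving (n : ℕ) :
    MeasurePreserving (PsiE n) (volume.prod volume) volume := by
  have h1 := (EuclideanSpace.volume_preserving_symm_measurableEquiv_toLp (Fin (n+1))).symm
  have h2 := (volume_preserving_piFinSuccAbove (fun _ : Fin (n+1) => ℝ) 0).symm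
  exact h1.comp h2

lemma PsiE_coord (t : ℝ) (y : Fin n → ℝ) : (PsiE n (t, y)) 0 = t := by
  simp [PsiE, MeasurableEquiv.coe_toLp, MeasurableEquiv.piFinSuccAbove]

lemma PsiE_line (t : ℝ) (y : Fin n → ℝ) :
    PsiE n (t, y) = t • (EuclideanSpace.single (0 : Fin (n+1)) (1:ℝ)) + PsiE n (0, y) := by
  simp only [PsiE, MeasurableEquiv.coe_toLp, MeasurableEquiv.piFinSuccAbove,
    MeasurableEquiv.trans_apply, MeasurableEquiv.symm_symm]
  ext j
  rcases Fin.eq_zero_or_eq_succ j with h | ⟨j', rfl⟩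
  · subst h; simp
  · simp [Fin.succ_ne_zero]




lemma line_sq_le (φ : EucN (n+1) → ℝ) (hφ : ContDiff ℝ (⊤:ℕ∞) φ) (hcs : HasCompactSupport φ)
    (y : Fin n → ℝ) (t : ℝ) :
    (φ (PsiE n (t, y)))^2 ≤ ∫ s : ℝ,
      |2 * φ (PsiE n (s, y)) * fderiv ℝ φ (PsiE n (s, y)) (EuclideanSpace.single 0 1)| := by
  have hone : (1:ℕ∞) ≤ (⊤:ℕ∞) := le_top
  set v0 : EucN (n+1) := EuclideanSpace.single (0 : Fin (n+1)) (1:ℝ) with hv0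
  set ℓ : ℝ → EucN (n+1) := fun s => PsiE n (s, y) with hℓ
  have hleq : ℓ = fun s => s • v0 + PsiE n (0, y) := funext fun s => PsiE_line s y
  have hld : ∀ s, HasDerivAt ℓ v0 s := by
    intro s
    rw [hleq]
    simpa using (((hasDerivAt_id s).smul_const v0).add_const (PsiE n (0, y)))
  have hlcont : Continuous ℓ := by
    rw [hleq]; continuity
  set W : ℝ → ℝ := fun s => 2 * φ (ℓ s) * fderiv ℝ φ (ℓ s) v0 with hW
  have hder : ∀ s, HasDerivAt (fun s => (φ (ℓ s))^2) (W s) s := by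
    intro s
    have h1 : HasFDerivAt φ (fderiv ℝ φ (ℓ s)) (ℓ s) :=
      (hφ.differentiable (by simp) (ℓ s)).hasFDerivAt
    have h2 : HasDerivAt (fun s => φ (ℓ s)) (fderiv ℝ φ (ℓ s) v0) s :=
      h1.comp_hasDerivAt s (hld s)
    have h3 := h2.pow 2
    have : ((2:ℕ):ℝ) * φ (ℓ s) ^ (2-1) * (fderiv ℝ φ (ℓ s)) v0 = W s := by
      norm_num [hW]
    rw [this] at h3
    exact h3
  have hWc : Continuous W := by
    have hfc : Continuous (fun z : EucN (n+1) => (fderiv ℝ φ z) v0) :=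
      (ContinuousLinearMap.apply ℝ ℝ v0).continuous.comp
        (hφ.continuous_fderiv (by simp))
    exact ((continuous_const.mul (hφ.continuous.comp hlcont)).mul (hfc.comp hlcont))
  obtain ⟨R', hR'⟩ := hcs.isBounded.subset_closedBall 0
  set R : ℝ := max R' 0 with hRdef
  have hR : tsupport φ ⊆ Metric.closedBall 0 R :=
    hR'.trans (Metric.closedBall_subset_closedBall (le_max_left _ _))
  have hR0 : (0:ℝ) ≤ R := le_max_right _ _
  have hzero : ∀ s : ℝ, R < |s| → φ (ℓ s) = 0 := by
    intro s hs
    apply image_eq_zero_of_notMem_tsupport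
    intro hmem
    have h1 := hR hmem
    rw [Metric.mem_closedBall, dist_zero_right] at h1
    have hco : |(ℓ s) 0| ≤ ‖ℓ s‖ := abs_coord_le_norm _ _
    have : (ℓ s) 0 = s := PsiE_coord s y
    rw [this] at hco
    linarith
  have hWcs : HasCompactSupport W := by
    apply HasCompactSupport.intro (isCompact_Icc (a := -(R+1)) (b := R+1))
    intro s hs
    have : R < |s| := by
      simp only [mem_Icc, not_and_or, not_le] at hs
      rcases hs with h | h
      · rw [abs_of_neg (by linarith)]; linarith
      · rw [abs_of_pos (by linarith)]; linarith
    simp [hW, hzero s this]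
  have hWint : Integrable W := hWc.integrable_of_hasCompactSupport hWcs
  have hWabs : Integrable (fun s => |W s|) := hWint.abs
  have hnn : 0 ≤ ∫ s, |W s| := integral_nonneg fun s => abs_nonneg _
  rcases le_or_gt t (-(R+1)) with ht | ht
  · have : φ (ℓ t) = 0 := hzero t (by rw [abs_of_neg (by linarith)]; linarith)
    rw [show φ (PsiE n (t, y)) = φ (ℓ t) from rfl, this]
    rw [zero_pow two_ne_zero]; exact hnn
  · have ha : -(R+1) ≤ t := ht.le
    have hfc : ∀ x ∈ Set.uIcc (-(R+1)) t, HasDerivAt (fun s => (φ (ℓ s))^2) (W x) x :=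
      fun x _ => hder x
    have hii : IntervalIntegrable W volume (-(R+1)) t := hWc.intervalIntegrable _ _
    have key := intervalIntegral.integral_eq_sub_of_hasDerivAt hfc hii
    have hz : φ (ℓ (-(R+1))) = 0 := by
      apply hzero
      rw [abs_of_neg (by linarith)]; linarith
    have h1 : (φ (ℓ t))^2 = ∫ s in (-(R+1))..t, W s := by
      rw [key, hz]; ring
    have h2 : |∫ s in (-(R+1))..t, W s| ≤ ∫ s in (-(R+1))..t, |W s| := by
      simpa using intervalIntegral.norm_integral_le_integral_norm (μ := volume) (f := W) ha
    have h3 : (∫ s in (-(R+1))..t, |W s|) ≤ ∫ s, |W s| := by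
      rw [intervalIntegral.integral_of_le ha]
      exact setIntegral_le_integral hWabs (Filter.Eventually.of_forall fun s => abs_nonneg _)
    calc (φ (PsiE n (t, y)))^2 = (φ (ℓ t))^2 := rfl
      _ = ∫ s in (-(R+1))..t, W s := h1
      _ ≤ |∫ s in (-(R+1))..t, W s| := le_abs_self _
      _ ≤ ∫ s in (-(R+1))..t, |W s| := h2
      _ ≤ ∫ s, |W s| := h3




lemma PsiE_coord_succ (t : ℝ) (y : Fin n → ℝ) (j : Fin n) :
    (PsiE n (t, y)) j.succ = y j := by
  simp [PsiE, MeasurableEquiv.coe_toLp, MeasurableEquiv.piFinSuccAbove,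
    Fin.succ_ne_zero]

lemma slab_bound (φ : EucN (n+1) → ℝ) (hφ : ContDiff ℝ (⊤:ℕ∞) φ) (hcs : HasCompactSupport φ)
    {a b : ℝ} (hab : a ≤ b) :
    ∫ z in {z : EucN (n+1) | z 0 ∈ Ioc a b}, (φ z)^2
      ≤ (b - a) * ∫ z : EucN (n+1), |2 * φ z * fderiv ℝ φ z (EuclideanSpace.single 0 1)| := by
  have hone : (1:ℕ∞) ≤ (⊤:ℕ∞) := le_top
  set v0 : EucN (n+1) := EuclideanSpace.single (0 : Fin (n+1)) (1:ℝ) with hv0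
  set Wz : EucN (n+1) → ℝ := fun z => |2 * φ z * fderiv ℝ φ z v0| with hWz
  set TW : ℝ := ∫ z : EucN (n+1), Wz z with hTW
  have hTWnn : 0 ≤ TW := integral_nonneg fun z => abs_nonneg _
  have mp := PsiE_measurePreserving n
  have emb := (PsiE n).measurableEmbedding
  have hφc : Continuous φ := hφ.continuous
  have hfc : Continuous (fun z : EucN (n+1) => (fderiv ℝ φ z) v0) :=
    (ContinuousLinearMap.apply ℝ ℝ v0).continuous.comp (hφ.continuous_fderiv (by simp))
  have hWzc : Continuous Wz := ((continuous_const.mul hφc).mul hfc).abs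
  have hWzcs : HasCompactSupport Wz := by
    apply HasCompactSupport.intro hcs
    intro z hz
    have : φ z = 0 := image_eq_zero_of_notMem_tsupport hz
    simp [hWz, this]
  have hWzint : Integrable Wz := hWzc.integrable_of_hasCompactSupport hWzcs
  have hφ2int : Integrable (fun z : EucN (n+1) => (φ z)^2) :=
    (hφc.pow 2).integrable_of_hasCompactSupport (hcs.comp_left (g := fun x : ℝ => x^2) (by simp) :)
  have hproj : Continuous (fun z : EucN (n+1) => z 0) :=
    (EuclideanSpace.proj (0 : Fin (n+1))).continuous
  have hS : MeasurableSet {z : EucN (n+1) | z 0 ∈ Ioc a b} :=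
    hproj.measurable measurableSet_Ioc
  set S : Set (EucN (n+1)) := {z | z 0 ∈ Ioc a b} with hSdef
  set g : EucN (n+1) → ℝ := S.indicator (fun z => (φ z)^2) with hg
  have hg_int : Integrable g := hφ2int.indicator hS
  have step1 : ∫ z in S, (φ z)^2 = ∫ z, g z := (integral_indicator hS).symm
  have step2 : ∫ z, g z = ∫ p, g (PsiE n p) ∂((volume : Measure ℝ).prod volume) :=
    (mp.integral_comp emb g).symm
  have hgΨ_int : Integrable (fun p => g (PsiE n p)) ((volume : Measure ℝ).prod volume) :=
    (mp.integrable_comp_emb emb).mpr hg_int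
  have hWΨ_int : Integrable (fun p => Wz (PsiE n p)) ((volume : Measure ℝ).prod volume) :=
    (mp.integrable_comp_emb emb).mpr hWzint
  have step3 : ∫ p, g (PsiE n p) ∂((volume : Measure ℝ).prod volume)
      = ∫ t : ℝ, ∫ y : Fin n → ℝ, g (PsiE n (t, y)) := integral_prod _ hgΨ_int
  -- inner integrals
  set J : ℝ → ℝ := fun t => ∫ y : Fin n → ℝ, (φ (PsiE n (t, y)))^2 with hJ
  have hinner : ∀ t : ℝ, (∫ y : Fin n → ℝ, g (PsiE n (t, y)))
      = (Ioc a b).indicator (fun _ => (1:ℝ)) t * J t := by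
    intro t
    by_cases htab : t ∈ Ioc a b
    · have : ∀ y : Fin n → ℝ, g (PsiE n (t, y)) = (φ (PsiE n (t, y)))^2 := by
        intro y
        rw [hg, indicator_apply, if_pos]
        show (PsiE n (t, y)) 0 ∈ Ioc a b
        rw [PsiE_coord]; exact htab
      simp only [this]
      rw [indicator_of_mem htab]
      simp [hJ]
    · have : ∀ y : Fin n → ℝ, g (PsiE n (t, y)) = 0 := by
        intro y
        rw [hg, indicator_apply, if_neg]
        show ¬ (PsiE n (t, y)) 0 ∈ Ioc a b
        rw [PsiE_coord]; exact htab
      simp only [this]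
      rw [indicator_of_notMem htab]
      simp
  -- J t ≤ TW
  have hJle : ∀ t : ℝ, J t ≤ TW := by
    intro t
    set H : (Fin n → ℝ) → ℝ := fun y => ∫ s : ℝ, Wz (PsiE n (s, y)) with hH
    have hptwise : ∀ y, (φ (PsiE n (t, y)))^2 ≤ H y := by
      intro y
      have := line_sq_le φ hφ hcs y t
      simpa [hH, hWz, hv0] using this
    have hHint : Integrable H := by
      have h0 := hWΨ_int.integral_norm_prod_right
      have : (fun y : Fin n → ℝ => ∫ s : ℝ, ‖Wz (PsiE n (s, y))‖) = H := by
        funext y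
        simp only [hH, Real.norm_eq_abs]
        congr 1
        funext s
        exact abs_of_nonneg (abs_nonneg _)
      rwa [this] at h0
    -- integrability of y ↦ φ(Ψ(t,y))²
    obtain ⟨R', hR'⟩ := hcs.isBounded.subset_closedBall 0
    set R : ℝ := max R' 0 with hRdef
    have hR0 : (0:ℝ) ≤ R := le_max_right _ _
    have hR : tsupport φ ⊆ Metric.closedBall 0 R :=
      hR'.trans (Metric.closedBall_subset_closedBall (le_max_left _ _))
    have hyint : Integrable (fun y : Fin n → ℝ => (φ (PsiE n (t, y)))^2) := by
      have hc : Continuous (fun y : Fin n → ℝ => (φ (PsiE n (t, y)))^2) := by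
        have hΨc : Continuous (fun y : Fin n → ℝ => PsiE n (t, y)) := by
          have : (fun y : Fin n → ℝ => PsiE n (t, y))
              = fun y => t • (EuclideanSpace.single (0 : Fin (n+1)) (1:ℝ)) + PsiE n (0, y) := by
            funext y; exact PsiE_line t y
          rw [this]
          apply continuous_const.add
          have hins : Continuous (fun y : Fin n → ℝ => Fin.insertNth (α := fun _ : Fin (n+1) => ℝ) 0 (0:ℝ) y) := by
            apply continuous_pi
            intro j
            rcases Fin.eq_zero_or_eq_succ j with h | ⟨j', rfl⟩
            · subst h; simpa using continuous_const
            · simpa [Fin.succ_ne_zero] using continuous_apply j'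
          have heq : (fun y : Fin n → ℝ => PsiE n (0, y))
              = fun y => (PiLp.continuousLinearEquiv 2 ℝ (fun _ : Fin (n+1) => ℝ)).symm
                  (Fin.insertNth (α := fun _ : Fin (n+1) => ℝ) 0 (0:ℝ) y) := by
            funext y
            rfl
          rw [heq]
          exact (PiLp.continuousLinearEquiv 2 ℝ (fun _ : Fin (n+1) => ℝ)).symm.continuous.comp hins
        exact (hφc.comp hΨc).pow 2
      apply hc.integrable_of_hasCompactSupport
      apply HasCompactSupport.intro (isCompact_closedBall (0 : Fin n → ℝ) R)
      intro y hy
      have : ∃ j : Fin n, R < |y j| := by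
        by_contra hcon
        push_neg at hcon
        apply hy
        rw [Metric.mem_closedBall, dist_zero_right]
        exact pi_norm_le_iff_of_nonneg hR0 |>.mpr fun j => by
          rw [Real.norm_eq_abs]; exact hcon j
      obtain ⟨j, hj⟩ := this
      have hz : φ (PsiE n (t, y)) = 0 := by
        apply image_eq_zero_of_notMem_tsupport
        intro hmem
        have h1 := hR hmem
        rw [Metric.mem_closedBall, dist_zero_right] at h1
        have hco : |(PsiE n (t, y)) j.succ| ≤ ‖PsiE n (t, y)‖ := abs_coord_le_norm _ _
        rw [PsiE_coord_succ] at hco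
        linarith
      simp [hz]
    calc J t ≤ ∫ y, H y := integral_mono hyint hHint hptwise
      _ = ∫ y : Fin n → ℝ, ∫ s : ℝ, Wz (PsiE n (s, y)) := rfl
      _ = ∫ s : ℝ, ∫ y : Fin n → ℝ, Wz (PsiE n (s, y)) := by
          exact (integral_integral_swap (f := fun s y => Wz (PsiE n (s, y))) hWΨ_int).symm
      _ = ∫ p, Wz (PsiE n p) ∂((volume : Measure ℝ).prod volume) := by
          exact integral_integral (f := fun s y => Wz (PsiE n (s, y))) hWΨ_int
      _ = TW := mp.integral_comp emb Wz
  -- outer estimate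
  have hJnn : ∀ t, 0 ≤ J t := fun t => integral_nonneg fun y => sq_nonneg _
  have hout_int : Integrable (fun t : ℝ => (Ioc a b).indicator (fun _ => (1:ℝ)) t * J t) := by
    have h0 : Integrable (fun t : ℝ => ∫ y : Fin n → ℝ, g (PsiE n (t, y))) :=
      hgΨ_int.integral_prod_left
    have : (fun t : ℝ => ∫ y : Fin n → ℝ, g (PsiE n (t, y)))
        = fun t => (Ioc a b).indicator (fun _ => (1:ℝ)) t * J t := funext hinner
    rwa [this] at h0
  have hout : (∫ t : ℝ, (Ioc a b).indicator (fun _ => (1:ℝ)) t * J t)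
      ≤ ∫ t : ℝ, (Ioc a b).indicator (fun _ => TW) t := by
    apply integral_mono hout_int ((integrable_indicator_iff measurableSet_Ioc).mpr
      ((integrableOn_const_iff (C := TW)).mpr (Or.inr measure_Ioc_lt_top)))
    intro t
    by_cases htab : t ∈ Ioc a b
    · simp only [indicator_of_mem htab, one_mul]
      exact hJle t
    · simp only [indicator_of_notMem htab, zero_mul]
      exact le_rfl
  have hfinal : (∫ t : ℝ, (Ioc a b).indicator (fun _ => TW) t) = (b - a) * TW := by
    rw [integral_indicator_const _ measurableSet_Ioc]
    simp [Real.volume_Ioc, ENNReal.toReal_ofReal (sub_nonneg.mpr hab), smul_eq_mul, hab]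
  calc ∫ z in S, (φ z)^2 = ∫ z, g z := step1
    _ = ∫ p, g (PsiE n p) ∂((volume : Measure ℝ).prod volume) := step2
    _ = ∫ t : ℝ, ∫ y : Fin n → ℝ, g (PsiE n (t, y)) := step3
    _ = ∫ t : ℝ, (Ioc a b).indicator (fun _ => (1:ℝ)) t * J t := by
        congr 1; funext t; exact hinner t
    _ ≤ ∫ t : ℝ, (Ioc a b).indicator (fun _ => TW) t := hout
    _ = (b - a) * TW := hfinal


lemma gradSq_mul_le {χ φ : EucN N → ℝ} (hχ : ContDiff ℝ (⊤:ℕ∞) χ) (hφ : ContDiff ℝ (⊤:ℕ∞) φ)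
    (z : EucN N) :
    gradSqE (fun z => χ z * φ z) z
      ≤ 2 * (χ z)^2 * gradSqE φ z + 2 * (φ z)^2 * gradSqE χ z := by
  have hone : (1:ℕ∞) ≤ (⊤:ℕ∞) := le_top
  have hdχ := hχ.differentiable (by simp) z
  have hdφ := hφ.differentiable (by simp) z
  have hf : fderiv ℝ (fun z => χ z * φ z) z = χ z • fderiv ℝ φ z + φ z • fderiv ℝ χ z :=
    fderiv_mul hdχ hdφ
  simp only [gradSqE, hf, ContinuousLinearMap.add_apply, ContinuousLinearMap.smul_apply,
    smul_eq_mul]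
  rw [Finset.mul_sum, Finset.mul_sum, ← Finset.sum_add_distrib]
  apply Finset.sum_le_sum
  intro p _
  nlinarith [sq_nonneg (χ z * (fderiv ℝ φ z) (EuclideanSpace.single p 1)
    - φ z * (fderiv ℝ χ z) (EuclideanSpace.single p 1))]

lemma coord_fderiv {n : ℕ} (τ : ℝ → ℝ) (hτ : ContDiff ℝ (⊤:ℕ∞) τ) (z : EucN (n+1)) :
    HasFDerivAt (fun z : EucN (n+1) => τ (z 0))
      (deriv τ (z 0) • (EuclideanSpace.proj (0 : Fin (n+1)) : EucN (n+1) →L[ℝ] ℝ)) z := by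
  have hone : (1:ℕ∞) ≤ (⊤:ℕ∞) := le_top
  have h1 : HasDerivAt τ (deriv τ (z 0)) (z 0) :=
    ((hτ.differentiable (by simp)) (z 0)).hasDerivAt
  have h2 : HasFDerivAt (fun z : EucN (n+1) => z 0)
      (EuclideanSpace.proj (0 : Fin (n+1)) : EucN (n+1) →L[ℝ] ℝ) z := by
    simpa using (EuclideanSpace.proj (0 : Fin (n+1)) : EucN (n+1) →L[ℝ] ℝ).hasFDerivAt (x := z)
  exact h1.comp_hasFDerivAt z h2

lemma gradSq_coord {n : ℕ} (τ : ℝ → ℝ) (hτ : ContDiff ℝ (⊤:ℕ∞) τ) (z : EucN (n+1)) :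
    gradSqE (fun z : EucN (n+1) => τ (z 0)) z = (deriv τ (z 0))^2 := by
  have h := (coord_fderiv τ hτ z).fderiv
  simp only [gradSqE, h, ContinuousLinearMap.smul_apply, smul_eq_mul]
  have hp : ∀ p : Fin (n+1),
      (EuclideanSpace.proj (0 : Fin (n+1)) : EucN (n+1) →L[ℝ] ℝ) (EuclideanSpace.single p 1)
        = if p = 0 then 1 else 0 := by
    intro p
    simp [PiLp.proj_apply, EuclideanSpace.single_apply, eq_comm]
  simp only [hp]
  rw [Finset.sum_eq_single 0]
  · simp
  · intro p _ hp0; simp [hp0]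
  · intro h; exact absurd (Finset.mem_univ _) h

lemma contDiff_coord_comp {n : ℕ} (τ : ℝ → ℝ) (hτ : ContDiff ℝ (⊤:ℕ∞) τ) :
    ContDiff ℝ (⊤:ℕ∞) (fun z : EucN (n+1) => τ (z 0)) :=
  hτ.comp (EuclideanSpace.proj (0 : Fin (n+1)) : EucN (n+1) →L[ℝ] ℝ).contDiff




lemma comb_ident {k : ℕ} (g : Fin k → EucN N → ℝ) (D : Fin k → Set (EucN N))
    (hDc : ∀ i, IsClosed (D i)) (hdis : ∀ i j, i ≠ j → Disjoint (D i) (D j))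
    (hsupp : ∀ i, tsupport (g i) ⊆ D i) (hg : ∀ i, ContDiff ℝ (⊤:ℕ∞) (g i))
    (β : Fin k → ℝ) (z : EucN N) :
    ((∑ i, β i * g i z)^2 = ∑ i, (β i)^2 * (g i z)^2) ∧
    (gradSqE (fun z => ∑ i, β i * g i z) z = ∑ i, (β i)^2 * gradSqE (g i) z) := by
  have hone : (1:ℕ∞) ≤ (⊤:ℕ∞) := le_top
  have hev0 : ∀ j, z ∉ D j → (g j) =ᶠ[nhds z] (fun _ => (0:ℝ)) := by
    intro j hj
    filter_upwards [(hDc j).isOpen_compl.mem_nhds hj] with x hx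
    by_contra hne
    exact hx (hsupp j (subset_closure (by simp [Function.mem_support, hne])))
  have hgz0 : ∀ j, z ∉ D j → g j z = 0 := fun j hj => (hev0 j hj).eq_of_nhds
  have hfd0 : ∀ j, z ∉ D j → fderiv ℝ (g j) z = 0 := by
    intro j hj
    rw [(hev0 j hj).fderiv_eq]
    exact fderiv_const_apply 0
  have hgradSq0 : ∀ j, z ∉ D j → gradSqE (g j) z = 0 := by
    intro j hj
    simp [gradSqE, hfd0 j hj]
  by_cases hz : ∃ i, z ∈ D i
  · obtain ⟨i0, hi0⟩ := hz
    have huniq : ∀ j, j ≠ i0 → z ∉ D j := by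
      intro j hj hzj
      exact (hdis j i0 hj).le_bot ⟨hzj, hi0⟩
    have hall : ∀ᶠ x in nhds z, ∀ j ∈ Finset.univ.erase i0, g j x = 0 := by
      rw [Filter.eventually_all_finset]
      intro j hj
      have := hev0 j (huniq j (Finset.ne_of_mem_erase hj))
      filter_upwards [this] with x hx using hx
    have hvev : (fun x => ∑ i, β i * g i x) =ᶠ[nhds z] (fun x => β i0 * g i0 x) := by
      filter_upwards [hall] with x hx
      apply Finset.sum_eq_single
      · intro j _ hj
        rw [hx j (Finset.mem_erase.mpr ⟨hj, Finset.mem_univ j⟩)]; ring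
      · intro h; exact absurd (Finset.mem_univ _) h
    have hvz : (∑ i, β i * g i z) = β i0 * g i0 z := hvev.eq_of_nhds
    have hvf : fderiv ℝ (fun x => ∑ i, β i * g i x) z = β i0 • fderiv ℝ (g i0) z := by
      rw [hvev.fderiv_eq]
      exact fderiv_const_mul ((hg i0).differentiable (by simp) z) _
    constructor
    · rw [hvz]
      rw [Finset.sum_eq_single i0]
      · ring
      · intro j _ hj; rw [hgz0 j (huniq j hj)]; ring
      · intro h; exact absurd (Finset.mem_univ _) h
    · have : gradSqE (fun x => ∑ i, β i * g i x) z = (β i0)^2 * gradSqE (g i0) z := by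
        simp only [gradSqE, hvf, ContinuousLinearMap.smul_apply, smul_eq_mul, mul_pow,
          Finset.mul_sum]
      rw [this, Finset.sum_eq_single i0]
      · intro j _ hj; rw [hgradSq0 j (huniq j hj)]; ring
      · intro h; exact absurd (Finset.mem_univ _) h
  · push_neg at hz
    have hallz : ∀ᶠ x in nhds z, ∀ j ∈ (Finset.univ : Finset (Fin k)), g j x = 0 := by
      rw [Filter.eventually_all_finset]
      intro j _
      filter_upwards [hev0 j (hz j)] with x hx using hx
    have hvev : (fun x => ∑ i, β i * g i x) =ᶠ[nhds z] (fun _ => (0:ℝ)) := by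
      filter_upwards [hallz] with x hx
      apply Finset.sum_eq_zero
      intro j hj
      rw [hx j hj]; ring
    have hvz : (∑ i, β i * g i z) = 0 := hvev.eq_of_nhds
    have hvf : fderiv ℝ (fun x => ∑ i, β i * g i x) z = 0 := by
      rw [hvev.fderiv_eq]; exact fderiv_const_apply 0
    constructor
    · rw [hvz]
      rw [Finset.sum_eq_zero]
      · ring
      · intro j _; rw [hgz0 j (hz j)]; ring
    · have h1 : gradSqE (fun x => ∑ i, β i * g i x) z = 0 := by simp [gradSqE, hvf]
      rw [h1, Finset.sum_eq_zero]
      intro j _; rw [hgradSq0 j (hz j)]; ring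



set_option maxHeartbeats 2000000 in
lemma key_construction {n : ℕ} (k : ℕ) (hk : 1 ≤ k) (K : ℝ) (hK : 0 < K) :
    ∃ M' : ℝ, 0 < M' ∧ ∀ (Ω : Set (EucN (n+1))) (φ : EucN (n+1) → ℝ),
      IsTestE Ω φ → φ ≠ 0 → rayleighE univ φ ≤ K + 1 →
      ∃ u : Fin k → EucN (n+1) → ℝ, (∀ i, IsTestE Ω (u i)) ∧ LinearIndependent ℝ u ∧
        ∀ β : Fin k → ℝ, β ≠ 0 → rayleighE univ (fun z => ∑ i, β i * u i z) ≤ M' := by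
  have hone : (1:ℕ∞) ≤ (⊤:ℕ∞) := le_top
  obtain ⟨B, hB1, htrap⟩ := exists_trapezoid
  have hkR : (0:ℝ) < k := by exact_mod_cast hk
  set s1 : ℝ := Real.sqrt (K+1) with hs1def
  have hs1 : 0 < s1 := Real.sqrt_pos.mpr (by linarith)
  have hs1sq : s1^2 = K+1 := Real.sq_sqrt (by linarith)
  set c₁ : ℝ := 2*s1 with hc₁def
  have hc₁ : 0 < c₁ := by positivity
  set δ : ℝ := 1/(4*k*c₁) with hδdef
  have hδ : 0 < δ := by positivity
  set P : ℝ := 2*(K+1) + 32*B^2/δ^2 with hPdef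
  have hP : 0 < P := by positivity
  refine ⟨2*k*P, by positivity, ?_⟩
  intro Ω φ htest hφne hray
  obtain ⟨hφsm, hφcs, hφΩ⟩ := htest
  have hφc : Continuous φ := hφsm.continuous
  set m : ℝ := ∫ z : EucN (n+1), (φ z)^2 with hmdef
  set E : ℝ := ∫ z : EucN (n+1), gradSqE φ z with hEdef
  have hInt2 : Integrable (fun z : EucN (n+1) => (φ z)^2) :=
    (hφc.pow 2).integrable_of_hasCompactSupport
      (hφcs.comp_left (g := fun x : ℝ => x^2) (by simp) :)
  have hIntG : Integrable (gradSqE φ) :=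
    (continuous_gradSqE hφsm).integrable_of_hasCompactSupport (hasCompactSupport_gradSqE hφcs)
  have hm : 0 < m := by
    rw [hmdef, integral_pos_iff_support_of_nonneg (fun z => sq_nonneg _) hInt2]
    have hzne : ∃ z, φ z ≠ 0 := by
      by_contra hcon
      push_neg at hcon
      exact hφne (funext hcon)
    obtain ⟨z0, hz0⟩ := hzne
    have : Function.support (fun z : EucN (n+1) => (φ z)^2) = Function.support φ := by
      ext z; simp [Function.mem_support, pow_eq_zero_iff]
    rw [this]
    exact (hφc.isOpen_support).measure_pos volume ⟨z0, hz0⟩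
  have hEnn : 0 ≤ E := integral_nonneg fun z => gradSqE_nonneg φ z
  have hE : E ≤ (K+1)*m := by
    have : rayleighE univ φ = E / m := by
      simp [rayleighE, Measure.restrict_univ, hmdef, hEdef]
    rw [this] at hray
    calc E = (E/m)*m := by field_simp
      _ ≤ (K+1)*m := by apply mul_le_mul_of_nonneg_right hray hm.le
  -- the directional derivative and total variation bound
  set d1 : EucN (n+1) → ℝ := fun z => fderiv ℝ φ z (EuclideanSpace.single 0 1) with hd1def
  have hd1c : Continuous d1 :=
    (ContinuousLinearMap.apply ℝ ℝ (EuclideanSpace.single 0 1)).continuous.comp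
      (hφsm.continuous_fderiv (by simp))
  have hd1cs : HasCompactSupport d1 := by
    apply HasCompactSupport.intro hφcs
    intro z hz
    have : fderiv ℝ φ z = 0 := by
      have hev : φ =ᶠ[nhds z] (fun _ => (0:ℝ)) := by
        filter_upwards [(isOpen_compl_iff.mpr (isClosed_tsupport φ)).mem_nhds hz] with x hx
        by_contra hne
        exact hx (subset_closure (by simp [Function.mem_support, hne]))
      rw [hev.fderiv_eq]
      exact fderiv_const_apply 0
    simp [hd1def, this]
  have hIntW : Integrable (fun z : EucN (n+1) => |2 * φ z * d1 z|) := by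
    apply Continuous.integrable_of_hasCompactSupport
    · exact ((continuous_const.mul hφc).mul hd1c).abs
    · apply HasCompactSupport.intro hφcs
      intro z hz
      simp [image_eq_zero_of_notMem_tsupport hz]
  have hIntd1sq : Integrable (fun z : EucN (n+1) => (d1 z)^2) :=
    (hd1c.pow 2).integrable_of_hasCompactSupport
      (hd1cs.comp_left (g := fun x : ℝ => x^2) (by simp) :)
  set T : ℝ := ∫ z : EucN (n+1), |2 * φ z * d1 z| with hTdef
  have hd1sqE : (∫ z : EucN (n+1), (d1 z)^2) ≤ E := by
    apply integral_mono hIntd1sq hIntG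
    intro z
    exact Finset.single_le_sum (f := fun p => (fderiv ℝ φ z (EuclideanSpace.single p 1))^2)
      (fun p _ => sq_nonneg _) (Finset.mem_univ 0)
  have hd1sqnn : 0 ≤ ∫ z : EucN (n+1), (d1 z)^2 := integral_nonneg fun z => sq_nonneg _
  have hT : T ≤ c₁ * m := by
    have hpt : ∀ z : EucN (n+1), |2 * φ z * d1 z| ≤ s1 * (φ z)^2 + s1⁻¹ * (d1 z)^2 := by
      intro z
      have h1 : |2 * φ z * d1 z| = 2 * |φ z| * |d1 z| := by
        rw [abs_mul, abs_mul]; simp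
      rw [h1]
      have h2 : 0 ≤ (s1 * |φ z| - s1⁻¹ * |d1 z| * s1 * s1⁻¹)^2 := sq_nonneg _
      have h3 : s1 * s1⁻¹ = 1 := mul_inv_cancel₀ hs1.ne'
      nlinarith [abs_nonneg (φ z), abs_nonneg (d1 z), sq_abs (φ z), sq_abs (d1 z),
        sq_nonneg (s1 * |φ z| - |d1 z|), hs1]
    have hint : Integrable (fun z : EucN (n+1) => s1 * (φ z)^2 + s1⁻¹ * (d1 z)^2) :=
      (hInt2.const_mul s1).add (hIntd1sq.const_mul s1⁻¹)
    calc T ≤ ∫ z : EucN (n+1), (s1 * (φ z)^2 + s1⁻¹ * (d1 z)^2) :=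
          integral_mono hIntW hint hpt
      _ = s1 * m + s1⁻¹ * ∫ z : EucN (n+1), (d1 z)^2 := by
          rw [integral_add (hInt2.const_mul s1) (hIntd1sq.const_mul s1⁻¹),
            integral_const_mul, integral_const_mul]
      _ ≤ s1 * m + s1⁻¹ * ((K+1)*m) := by
          have h4 : (∫ z : EucN (n+1), (d1 z)^2) ≤ (K+1)*m := le_trans hd1sqE hE
          have : s1⁻¹ * (∫ z : EucN (n+1), (d1 z)^2) ≤ s1⁻¹ * ((K+1)*m) :=
            mul_le_mul_of_nonneg_left h4 (by positivity)
          linarith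
      _ = c₁ * m := by
          have : s1⁻¹ * (K+1) = s1 := by
            rw [← hs1sq]; field_simp
          rw [hc₁def]
          calc s1 * m + s1⁻¹ * ((K+1)*m) = s1*m + (s1⁻¹ * (K+1))*m := by ring
            _ = s1*m + s1*m := by rw [this]
            _ = 2*s1*m := by ring
  have hTnn : 0 ≤ T := integral_nonneg fun z => abs_nonneg _
  -- the mass distribution function
  set F : ℝ → ℝ := fun c => ∫ z in {z : EucN (n+1) | z 0 ≤ c}, (φ z)^2 with hFdef
  have hproj : Continuous (fun z : EucN (n+1) => z 0) :=
    (EuclideanSpace.proj (0 : Fin (n+1))).continuous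
  have hSmeas : ∀ c : ℝ, MeasurableSet {z : EucN (n+1) | z 0 ≤ c} :=
    fun c => hproj.measurable measurableSet_Iic
  have hSlabMeas : ∀ a b : ℝ, MeasurableSet {z : EucN (n+1) | z 0 ∈ Ioc a b} :=
    fun a b => hproj.measurable measurableSet_Ioc
  have hsplit : ∀ a b : ℝ, a ≤ b →
      F b = F a + ∫ z in {z : EucN (n+1) | z 0 ∈ Ioc a b}, (φ z)^2 := by
    intro a b hab
    have hset : {z : EucN (n+1) | z 0 ≤ b}
        = {z : EucN (n+1) | z 0 ≤ a} ∪ {z : EucN (n+1) | z 0 ∈ Ioc a b} := by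
      ext z
      simp only [mem_setOf_eq, mem_union, mem_Ioc]
      constructor
      · intro h
        rcases le_or_gt (z 0) a with h2 | h2
        · exact Or.inl h2
        · exact Or.inr ⟨h2, h⟩
      · rintro (h | ⟨h1, h2⟩)
        · exact le_trans h hab
        · exact h2
    have hdisj : Disjoint {z : EucN (n+1) | z 0 ≤ a} {z : EucN (n+1) | z 0 ∈ Ioc a b} := by
      rw [Set.disjoint_left]
      intro z hz1 hz2
      exact absurd hz2.1 (not_lt.mpr hz1)
    rw [hFdef]
    simp only []
    rw [hset, setIntegral_union hdisj (hSlabMeas a b) hInt2.integrableOn hInt2.integrableOn]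
  have hslabnn : ∀ a b : ℝ, 0 ≤ ∫ z in {z : EucN (n+1) | z 0 ∈ Ioc a b}, (φ z)^2 :=
    fun a b => integral_nonneg fun z => sq_nonneg _
  have hslabub : ∀ a b : ℝ, a ≤ b →
      (∫ z in {z : EucN (n+1) | z 0 ∈ Ioc a b}, (φ z)^2) ≤ (b-a) * (c₁*m) := by
    intro a b hab
    calc (∫ z in {z : EucN (n+1) | z 0 ∈ Ioc a b}, (φ z)^2)
        ≤ (b-a) * T := by
          have := slab_bound φ hφsm hφcs hab
          simpa [hTdef, hd1def] using this
      _ ≤ (b-a) * (c₁*m) := mul_le_mul_of_nonneg_left hT (by linarith)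
  have hFmono : Monotone F := by
    intro a b hab
    rw [hsplit a b hab]
    linarith [hslabnn a b]
  have hFlip : ∀ a b : ℝ, a ≤ b → F b - F a ≤ (b-a)*(c₁*m) := by
    intro a b hab
    rw [hsplit a b hab]
    have := hslabub a b hab
    linarith
  have hFcont : Continuous F := by
    have hL : LipschitzWith (Real.toNNReal (c₁*m)) F := by
      apply LipschitzWith.of_dist_le_mul
      intro a b
      rw [Real.dist_eq, Real.dist_eq]
      have hco : (Real.toNNReal (c₁*m) : ℝ) = c₁*m := Real.coe_toNNReal _ (by positivity)
      rw [hco]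
      rcases le_total a b with hab | hab
      · rw [abs_of_nonpos (by linarith [hFmono hab]), abs_of_nonpos (by linarith)]
        have := hFlip a b hab
        linarith
      · rw [abs_of_nonneg (by linarith [hFmono hab]), abs_of_nonneg (by linarith)]
        have := hFlip b a hab
        linarith
    exact hL.continuous
  -- support bounds
  obtain ⟨R', hR'⟩ := hφcs.isBounded.subset_closedBall 0
  set R0 : ℝ := max R' 0 with hR0def
  have hR0nn : (0:ℝ) ≤ R0 := le_max_right _ _
  have hR0 : tsupport φ ⊆ Metric.closedBall 0 R0 :=
    hR'.trans (Metric.closedBall_subset_closedBall (le_max_left _ _))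
  have hφz : ∀ z : EucN (n+1), R0 < |z 0| → φ z = 0 := by
    intro z hz
    apply image_eq_zero_of_notMem_tsupport
    intro hmem
    have h1 := hR0 hmem
    rw [Metric.mem_closedBall, dist_zero_right] at h1
    linarith [abs_coord_le_norm z 0]
  have hF0 : F (-R0-1) = 0 := by
    rw [hFdef]
    simp only []
    rw [setIntegral_congr_fun (hSmeas _) (g := fun _ => (0:ℝ))]
    · simp
    · intro z hz
      have : φ z = 0 := by
        apply hφz
        rw [abs_of_nonpos (by simp only [mem_setOf_eq] at hz; linarith)]
        simp only [mem_setOf_eq] at hz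
        linarith
      simp [this]
  have hFm : F (R0+1) = m := by
    have hcompl := integral_add_compl (hSmeas (R0+1)) hInt2
    have hzero : (∫ z in {z : EucN (n+1) | z 0 ≤ R0+1}ᶜ, (φ z)^2) = 0 := by
      rw [setIntegral_congr_fun (hSmeas (R0+1)).compl (g := fun _ => (0:ℝ))]
      · simp
      · intro z hz
        simp only [mem_compl_iff, mem_setOf_eq, not_le] at hz
        have : φ z = 0 := by
          apply hφz
          rw [abs_of_nonneg (by linarith)]
          linarith
        simp [this]
    rw [hFdef]
    simp only []
    rw [← hmdef] at hcompl
    linarith [hcompl, hzero]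
  -- choose the cut points
  set q : ℝ := m/(4*k) with hqdef
  have hq : 0 < q := by positivity
  have hIVT : ∀ j : ℕ, j ≤ 4*k → ∃ t, t ∈ Icc (-R0-1) (R0+1) ∧ F t = j*q := by
    intro j hj
    have hab : (-R0-1 : ℝ) ≤ R0+1 := by linarith
    have hsub := intermediate_value_Icc hab hFcont.continuousOn
    have hjm : (j:ℝ)*q ∈ Icc (F (-R0-1)) (F (R0+1)) := by
      rw [hF0, hFm]
      constructor
      · positivity
      · have hj' : (j:ℝ) ≤ 4*k := by exact_mod_cast hj
        calc (j:ℝ)*q ≤ (4*k)*q := mul_le_mul_of_nonneg_right hj' hq.le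
          _ = m := by rw [hqdef]; field_simp
    obtain ⟨t, ht1, ht2⟩ := hsub hjm
    exact ⟨t, ht1, ht2⟩
  set sfun : ℕ → ℝ := fun j => if h : j ≤ 4*k then (hIVT j h).choose else 0 with hsfundef
  have hFs : ∀ j : ℕ, (h : j ≤ 4*k) → F (sfun j) = j*q := by
    intro j h
    rw [hsfundef]
    simp only [dif_pos h]
    exact (hIVT j h).choose_spec.2
  have hgap : ∀ i j : ℕ, i < j → j ≤ 4*k → sfun i + ((j:ℝ) - i) * δ ≤ sfun j := by
    intro i j hij hj
    have hi : i ≤ 4*k := le_trans hij.le hj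
    have hFi := hFs i hi
    have hFj := hFs j hj
    have hlt : sfun i < sfun j := by
      by_contra hcon
      push_neg at hcon
      have := hFmono hcon
      rw [hFi, hFj] at this
      have hijR : (i:ℝ) < j := by exact_mod_cast hij
      nlinarith
    have hlip := hFlip (sfun i) (sfun j) hlt.le
    rw [hFi, hFj] at hlip
    have hqδ : q = δ * (c₁ * m) := by
      rw [hqdef, hδdef]
      field_simp
    have hijR : (i:ℝ) + 1 ≤ j := by exact_mod_cast hij
    have hcm : 0 < c₁ * m := by positivity
    -- (j - i) * q ≤ (sfun j - sfun i) * (c₁ m), q = δ c₁ m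
    have h2 : ((j:ℝ) - i) * (δ * (c₁*m)) ≤ (sfun j - sfun i) * (c₁*m) := by
      calc ((j:ℝ) - i) * (δ * (c₁*m)) = (j:ℝ)*q - i*q := by rw [hqδ]; ring
        _ ≤ (sfun j - sfun i) * (c₁*m) := by linarith
    have h3 : ((j:ℝ) - i) * δ ≤ sfun j - sfun i := by
      have := (mul_le_mul_iff_left₀ hcm).mp (by linarith [h2] : (((j:ℝ) - i) * δ) * (c₁*m) ≤ (sfun j - sfun i) * (c₁*m))
      linarith
    linarith
  -- the k pieces
  set a : Fin k → ℝ := fun i => sfun (4*i.val+1) with hadef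
  set b : Fin k → ℝ := fun i => sfun (4*i.val+3) with hbdef
  have hidx3 : ∀ i : Fin k, 4*i.val+3 ≤ 4*k := by
    intro i
    have := i.isLt
    omega
  have hidx1 : ∀ i : Fin k, 4*i.val+1 ≤ 4*k := by
    intro i
    have := i.isLt
    omega
  have hab2 : ∀ i : Fin k, a i + 2*δ ≤ b i := by
    intro i
    have := hgap (4*i.val+1) (4*i.val+3) (by omega) (hidx3 i)
    have hc : ((4*i.val+3 : ℕ):ℝ) - ((4*i.val+1 : ℕ):ℝ) = 2 := by push_cast; ring
    rw [hc] at this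
    rw [hadef, hbdef]
    linarith
  have hab : ∀ i : Fin k, a i ≤ b i := fun i => by linarith [hab2 i, hδ]
  have htra : ∀ i : Fin k, ∃ τ : ℝ → ℝ, ContDiff ℝ (⊤ : ℕ∞) τ ∧ (∀ t, 0 ≤ τ t) ∧
      (∀ t, τ t ≤ 1) ∧ (∀ t ∈ Icc (a i) (b i), τ t = 1) ∧
      (∀ t, t ∉ Ioo (a i - δ/2) (b i + δ/2) → τ t = 0) ∧
      (∀ t, |deriv τ t| ≤ 2 * B / (δ/2)) :=
    fun i => htrap (a i) (b i) (δ/2) (by positivity) (hab i)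
  choose τ hτsm hτ0 hτ1 hτcore hτout hτder using htra
  set g : Fin k → EucN (n+1) → ℝ := fun i => fun z => τ i (z 0) * φ z with hgdef
  set D : Fin k → Set (EucN (n+1)) :=
    fun i => {z : EucN (n+1) | z 0 ∈ Icc (a i - δ/2) (b i + δ/2)} with hDdef
  have hDc : ∀ i, IsClosed (D i) := fun i => isClosed_Icc.preimage hproj
  have hdis : ∀ i j : Fin k, i ≠ j → Disjoint (D i) (D j) := by
    have hlt : ∀ i j : Fin k, i < j → Disjoint (D i) (D j) := by
      intro i j hij
      have hgap2 := hgap (4*i.val+3) (4*j.val+1) (by have := hij; omega) (hidx1 j)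
      have hvv : (i:ℕ) < (j:ℕ) := hij
      have hc : ((4*j.val+1 : ℕ):ℝ) - ((4*i.val+3 : ℕ):ℝ) ≥ 2 := by
        push_cast
        have : (i.val:ℝ) + 1 ≤ j.val := by exact_mod_cast hvv
        linarith
      have hsep : b i + δ/2 < a j - δ/2 := by
        have h1 : sfun (4*i.val+3) + 2*δ ≤ sfun (4*j.val+1) := by
          nlinarith [hgap2, hδ, hc]
        rw [hadef, hbdef]
        simp only []
        linarith
      rw [Set.disjoint_left]
      intro z hz1 hz2
      rw [hDdef] at hz1 hz2
      simp only [mem_setOf_eq, mem_Icc] at hz1 hz2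
      linarith [hz1.2, hz2.1]
    intro i j hij
    rcases lt_or_gt_of_ne hij with h | h
    · exact hlt i j h
    · exact (hlt j i h).symm
  have hχsm : ∀ i, ContDiff ℝ (⊤ : ℕ∞) (fun z : EucN (n+1) => τ i (z 0)) :=
    fun i => contDiff_coord_comp (τ i) (hτsm i)
  have hgsm : ∀ i, ContDiff ℝ (⊤ : ℕ∞) (g i) := fun i => (hχsm i).mul hφsm
  have hsupp_phi : ∀ i, tsupport (g i) ⊆ tsupport φ := by
    intro i
    apply closure_minimal _ (isClosed_tsupport φ)
    intro z hz
    apply subset_closure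
    have hz' : g i z ≠ 0 := hz
    have : φ z ≠ 0 := by
      intro h0
      apply hz'
      rw [hgdef]
      simp [h0]
    exact this
  have hgcs : ∀ i, HasCompactSupport (g i) :=
    fun i => IsCompact.of_isClosed_subset hφcs (isClosed_tsupport _) (hsupp_phi i)
  have hsupp_D : ∀ i, tsupport (g i) ⊆ D i := by
    intro i
    apply closure_minimal _ (hDc i)
    intro z hz
    have hz' : g i z ≠ 0 := hz
    have hτne : τ i (z 0) ≠ 0 := by
      intro h0
      apply hz'
      rw [hgdef]
      simp [h0]
    by_contra hzD
    apply hτne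
    apply hτout
    intro hmem
    apply hzD
    rw [hDdef]
    simp only [mem_setOf_eq, mem_Icc]
    exact ⟨hmem.1.le, hmem.2.le⟩
  have hIntg2 : ∀ i, Integrable (fun z : EucN (n+1) => (g i z)^2) :=
    fun i => ((hgsm i).continuous.pow 2).integrable_of_hasCompactSupport
      ((hgcs i).comp_left (g := fun x : ℝ => x^2) (by simp) :)
  have hIntgG : ∀ i, Integrable (gradSqE (g i)) :=
    fun i => (continuous_gradSqE (hgsm i)).integrable_of_hasCompactSupport
      (hasCompactSupport_gradSqE (hgcs i))
  set Bint : Fin k → ℝ := fun i => ∫ z : EucN (n+1), (g i z)^2 with hBintdef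
  set Aint : Fin k → ℝ := fun i => ∫ z : EucN (n+1), gradSqE (g i) z with hAintdef
  have hBlow : ∀ i, m/(2*k) ≤ Bint i := by
    intro i
    have hFab : F (b i) - F (a i) = m/(2*k) := by
      have h1 := hFs (4*i.val+1) (hidx1 i)
      have h3 := hFs (4*i.val+3) (hidx3 i)
      rw [hadef, hbdef]
      simp only []
      rw [h1, h3, hqdef]
      push_cast
      field_simp
      ring
    have hslab : (∫ z in {z : EucN (n+1) | z 0 ∈ Ioc (a i) (b i)}, (φ z)^2) = m/(2*k) := by
      have := hsplit (a i) (b i) (hab i)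
      linarith [hFab]
    have hpt : ∀ z : EucN (n+1),
        ({z : EucN (n+1) | z 0 ∈ Ioc (a i) (b i)}).indicator (fun z => (φ z)^2) z
          ≤ (g i z)^2 := by
      intro z
      rw [indicator_apply]
      split_ifs with hzin
      · simp only [mem_setOf_eq, mem_Ioc] at hzin
        have hτ1' : τ i (z 0) = 1 := hτcore i _ ⟨hzin.1.le, hzin.2⟩
        rw [hgdef]
        simp only [hτ1', one_mul]
        exact le_rfl
      · exact sq_nonneg _
    have hindint : Integrable
        (({z : EucN (n+1) | z 0 ∈ Ioc (a i) (b i)}).indicator (fun z => (φ z)^2)) :=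
      hInt2.indicator (hSlabMeas _ _)
    calc m/(2*k) = ∫ z in {z : EucN (n+1) | z 0 ∈ Ioc (a i) (b i)}, (φ z)^2 := hslab.symm
      _ = ∫ z : EucN (n+1),
          ({z : EucN (n+1) | z 0 ∈ Ioc (a i) (b i)}).indicator (fun z => (φ z)^2) z :=
        (integral_indicator (hSlabMeas _ _)).symm
      _ ≤ Bint i := integral_mono hindint (hIntg2 i) hpt
  have hBpos : ∀ i, 0 < Bint i := fun i => lt_of_lt_of_le (by positivity) (hBlow i)
  have hAup : ∀ i, Aint i ≤ P * m := by
    intro i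
    have hpt : ∀ z : EucN (n+1), gradSqE (g i) z
        ≤ 2 * gradSqE φ z + (32*B^2/δ^2) * (φ z)^2 := by
      intro z
      have h1 := gradSq_mul_le (hχsm i) hφsm z
      have h2 : gradSqE (fun z : EucN (n+1) => τ i (z 0)) z = (deriv (τ i) (z 0))^2 :=
        gradSq_coord (τ i) (hτsm i) z
      have h3 : (deriv (τ i) (z 0))^2 ≤ 16*B^2/δ^2 := by
        have := hτder i (z 0)
        have habs : |deriv (τ i) (z 0)| ≤ 4*B/δ := by
          have : 2*B/(δ/2) = 4*B/δ := by field_simp; ring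
          linarith [hτder i (z 0), this.symm.le]
        have h4 : (deriv (τ i) (z 0))^2 = |deriv (τ i) (z 0)|^2 := (sq_abs _).symm
        rw [h4]
        have h5 : (0:ℝ) ≤ 4*B/δ := by positivity
        calc |deriv (τ i) (z 0)|^2 ≤ (4*B/δ)^2 := by nlinarith [abs_nonneg (deriv (τ i) (z 0))]
          _ = 16*B^2/δ^2 := by field_simp; ring
      have h5 : (τ i (z 0))^2 ≤ 1 := by
        have := hτ0 i (z 0)
        have := hτ1 i (z 0)
        nlinarith
      have h6 : gradSqE φ z ≥ 0 := gradSqE_nonneg φ z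
      have h7 : (φ z)^2 ≥ 0 := sq_nonneg _
      calc gradSqE (g i) z
          ≤ 2 * (τ i (z 0))^2 * gradSqE φ z + 2 * (φ z)^2 * gradSqE (fun z : EucN (n+1) => τ i (z 0)) z := h1
        _ = 2 * (τ i (z 0))^2 * gradSqE φ z + 2 * (φ z)^2 * (deriv (τ i) (z 0))^2 := by rw [h2]
        _ ≤ 2 * 1 * gradSqE φ z + 2 * (φ z)^2 * (16*B^2/δ^2) := by nlinarith
        _ = 2 * gradSqE φ z + (32*B^2/δ^2) * (φ z)^2 := by ring
    have hrhsint : Integrable (fun z : EucN (n+1) =>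
        2 * gradSqE φ z + (32*B^2/δ^2) * (φ z)^2) :=
      (hIntG.const_mul 2).add (hInt2.const_mul _)
    calc Aint i ≤ ∫ z : EucN (n+1), (2 * gradSqE φ z + (32*B^2/δ^2) * (φ z)^2) :=
        integral_mono (hIntgG i) hrhsint hpt
      _ = 2*E + (32*B^2/δ^2)*m := by
          rw [integral_add (hIntG.const_mul 2) (hInt2.const_mul _), integral_const_mul,
            integral_const_mul]
      _ ≤ 2*(K+1)*m + (32*B^2/δ^2)*m := by nlinarith
      _ = P * m := by rw [hPdef]; ring
  have hAB : ∀ i, Aint i ≤ (2*k*P) * Bint i := by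
    intro i
    have h1 : P * m = (2*k*P) * (m/(2*k)) := by field_simp
    calc Aint i ≤ P * m := hAup i
      _ = (2*k*P) * (m/(2*k)) := h1
      _ ≤ (2*k*P) * Bint i := mul_le_mul_of_nonneg_left (hBlow i) (by positivity)
  -- nonvanishing points
  have hgne : ∀ i, ∃ z, g i z ≠ 0 := by
    intro i
    by_contra hcon
    push_neg at hcon
    have : Bint i = 0 := by
      rw [hBintdef]
      simp only []
      rw [integral_congr_ae (g := fun _ => (0:ℝ)) (Filter.Eventually.of_forall fun z => by
        rw [hcon z]; ring)]
      simp
    linarith [hBpos i]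
  -- linear independence
  have hlinind : LinearIndependent ℝ g := by
    rw [Fintype.linearIndependent_iff]
    intro c hc i
    obtain ⟨zi, hzi⟩ := hgne i
    have hziD : zi ∈ D i := hsupp_D i (subset_closure hzi)
    have hzval := congr_fun hc zi
    have hsum : (∑ j, c j • g j) zi = ∑ j, c j * g j zi := by
      rw [Finset.sum_apply]
      congr 1
    have hred : (∑ j, c j * g j zi) = c i * g i zi := by
      apply Finset.sum_eq_single
      · intro j _ hji
        have : g j zi = 0 := by
          by_contra hne
          have : zi ∈ D j := hsupp_D j (subset_closure hne)
          exact (Set.disjoint_left.mp (hdis j i hji) this) hziD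
        rw [this]; ring
      · intro h; exact absurd (Finset.mem_univ _) h
    rw [hsum, hred] at hzval
    simp only [Pi.zero_apply] at hzval
    rcases mul_eq_zero.mp hzval with h | h
    · exact h
    · exact absurd h hzi
  refine ⟨g, fun i => ⟨hgsm i, hgcs i, (hsupp_phi i).trans hφΩ⟩, hlinind, ?_⟩
  intro β hβ
  obtain ⟨i0, hβ0⟩ := Function.ne_iff.mp hβ
  have hβ0sq : 0 < (β i0)^2 := by
    have := abs_pos.mpr hβ0
    nlinarith [sq_abs (β i0)]
  have hcomb := fun z => comb_ident g D hDc hdis hsupp_D hgsm β z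
  have hnum : (∫ z : EucN (n+1), gradSqE (fun z => ∑ i, β i * g i z) z)
      = ∑ i, (β i)^2 * Aint i := by
    rw [integral_congr_ae (g := fun z => ∑ i, (β i)^2 * gradSqE (g i) z)
      (Filter.Eventually.of_forall fun z => (hcomb z).2)]
    rw [integral_finset_sum _ (fun i _ => (hIntgG i).const_mul ((β i)^2))]
    congr 1
    funext i
    rw [integral_const_mul]
  have hden : (∫ z : EucN (n+1), (∑ i, β i * g i z)^2)
      = ∑ i, (β i)^2 * Bint i := by
    rw [integral_congr_ae (g := fun z => ∑ i, (β i)^2 * (g i z)^2)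
      (Filter.Eventually.of_forall fun z => (hcomb z).1)]
    rw [integral_finset_sum _ (fun i _ => (hIntg2 i).const_mul ((β i)^2))]
    congr 1
    funext i
    rw [integral_const_mul]
  have hdenpos : 0 < ∑ i, (β i)^2 * Bint i := by
    have h1 : (β i0)^2 * Bint i0 ≤ ∑ i, (β i)^2 * Bint i :=
      Finset.single_le_sum (f := fun i => (β i)^2 * Bint i)
        (fun i _ => mul_nonneg (sq_nonneg _) (hBpos i).le) (Finset.mem_univ i0)
    have h2 : 0 < (β i0)^2 * Bint i0 := mul_pos hβ0sq (hBpos i0)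
    linarith
  have hnumle : (∑ i, (β i)^2 * Aint i) ≤ (2*k*P) * ∑ i, (β i)^2 * Bint i := by
    rw [Finset.mul_sum]
    apply Finset.sum_le_sum
    intro i _
    calc (β i)^2 * Aint i ≤ (β i)^2 * ((2*k*P) * Bint i) :=
        mul_le_mul_of_nonneg_left (hAB i) (sq_nonneg _)
      _ = (2*k*P) * ((β i)^2 * Bint i) := by ring
  have hr : rayleighE univ (fun z => ∑ i, β i * g i z)
      = (∑ i, (β i)^2 * Aint i) / (∑ i, (β i)^2 * Bint i) := by
    rw [rayleighE, Measure.restrict_univ, hnum, hden]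
  rw [hr, div_le_iff₀ hdenpos]
  exact hnumle

/-- Lemma `exthm`. For every `K > 0` there exists
`M' = M'(k,K,N) > 0` such that, for every open set `Ω ⊆ ℝ^N`, if `λ₁(Ω) ≤ K` then
`λ_k(Ω) ≤ M'`. -/
theorem lambda_k_bounded_by_lambda_one_bound
    (N k : ℕ) (hN : 2 ≤ N) (hk : 1 ≤ k) (K : ℝ) (hK : 0 < K) :
    ∃ M' : ℝ, 0 < M' ∧
      ∀ Ω : Set (EucN N), IsOpen Ω → eigenvalE Ω 1 ≤ K → eigenvalE Ω k ≤ M' := by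
  obtain ⟨n, rfl⟩ : ∃ n, N = n + 1 := ⟨N-1, by omega⟩
  obtain ⟨M', hM'pos, hM'⟩ := key_construction (n := n) k hk K hK
  refine ⟨M', hM'pos, ?_⟩
  intro Ω hΩ hlam1
  have hlow : ∀ (j : ℕ), 1 ≤ j → ∀ c : ℝ,
      c ∈ { c : ℝ | ∃ u : Fin j → EucN (n+1) → ℝ, (∀ i, IsTestE Ω (u i)) ∧
        LinearIndependent ℝ u ∧
        ∀ β : Fin j → ℝ, β ≠ 0 → rayleighE univ (fun z => ∑ i, β i * u i z) ≤ c } → 0 ≤ c := by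
    rintro j hj c ⟨u, hu, hli, hb⟩
    have hβ : (fun _ : Fin j => (1:ℝ)) ≠ 0 := by
      intro h
      have := congr_fun h ⟨0, hj⟩
      norm_num at this
    exact le_trans (rayleighE_nonneg _) (hb _ hβ)
  by_cases hS1 : { c : ℝ | ∃ u : Fin 1 → EucN (n+1) → ℝ, (∀ i, IsTestE Ω (u i)) ∧
      LinearIndependent ℝ u ∧
      ∀ β : Fin 1 → ℝ, β ≠ 0 → rayleighE univ (fun z => ∑ i, β i * u i z) ≤ c }.Nonempty
  · have hbdd1 : BddBelow { c : ℝ | ∃ u : Fin 1 → EucN (n+1) → ℝ, (∀ i, IsTestE Ω (u i)) ∧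
        LinearIndependent ℝ u ∧
        ∀ β : Fin 1 → ℝ, β ≠ 0 → rayleighE univ (fun z => ∑ i, β i * u i z) ≤ c } :=
      ⟨0, fun c hc => hlow 1 le_rfl c hc⟩
    rw [eigenvalE] at hlam1
    have hlt := lt_of_le_of_lt hlam1 (show K < K + 1 by linarith)
    obtain ⟨c, hcmem, hclt⟩ := (csInf_lt_iff hbdd1 hS1).mp hlt
    obtain ⟨u, hu, hli, hb⟩ := hcmem
    have hφne : u 0 ≠ 0 := hli.ne_zero 0
    have hray : rayleighE univ (u 0) ≤ K + 1 := by
      have hβ : (fun _ : Fin 1 => (1:ℝ)) ≠ 0 := by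
        intro h
        have := congr_fun h 0
        norm_num at this
      have h1 := hb _ hβ
      have heq : (fun z => ∑ i : Fin 1, (1:ℝ) * u i z) = u 0 := by
        funext z
        rw [Fin.sum_univ_one, one_mul]
      rw [heq] at h1
      linarith
    obtain ⟨u', hu', hli', hb'⟩ := hM' Ω (u 0) (hu 0) hφne hray
    have hbddk : BddBelow { c : ℝ | ∃ u : Fin k → EucN (n+1) → ℝ, (∀ i, IsTestE Ω (u i)) ∧
        LinearIndependent ℝ u ∧
        ∀ β : Fin k → ℝ, β ≠ 0 → rayleighE univ (fun z => ∑ i, β i * u i z) ≤ c } :=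
      ⟨0, fun c hc => hlow k hk c hc⟩
    rw [eigenvalE]
    exact csInf_le hbddk ⟨u', hu', hli', hb'⟩
  · have hSk : { c : ℝ | ∃ u : Fin k → EucN (n+1) → ℝ, (∀ i, IsTestE Ω (u i)) ∧
        LinearIndependent ℝ u ∧
        ∀ β : Fin k → ℝ, β ≠ 0 → rayleighE univ (fun z => ∑ i, β i * u i z) ≤ c } = ∅ := by
      rw [Set.eq_empty_iff_forall_notMem]
      rintro c ⟨u, hu, hli, hb⟩
      apply hS1
      refine ⟨rayleighE univ (u ⟨0, hk⟩), fun _ : Fin 1 => u ⟨0, hk⟩, fun _ => hu _, ?_, ?_⟩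
      · rw [linearIndependent_unique_iff]
        exact hli.ne_zero _
      · intro β hβ0
        have hβne : β 0 ≠ 0 := by
          intro h
          apply hβ0
          funext i
          rw [Subsingleton.elim i 0, h]
          rfl
        have heq : (fun z => ∑ i : Fin 1, β i * u ⟨0, hk⟩ z)
            = fun z => β 0 * u ⟨0, hk⟩ z := by
          funext z
          rw [Fin.sum_univ_one]
        rw [heq, rayleighE_smul _ hβne (hu ⟨0, hk⟩).1]
    rw [eigenvalE, hSk, Real.sInf_empty]
    exact hM'pos.le

end SpectralMin
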